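/- For every continuous function φ on [0,1], the sequence of integrals ∫₀¹ φ dμ_{α,k} (where μ_{α,k} has piecewise-constant density f_{α,k}(x) = 2^k α^{n(j)}(1-α)^{k-n(j)} on X_j^k) is a Cauchy sequence in ℝ. -/

import Mathlib

open MeasureTheory Set

/-- Number of 1 digits in the binary expansion of `m`. -/
def binOnes (m : ℕ) : ℕ := (Nat.digits 2 m).count 1

/-- The piecewise-constant density of the approximating measure `μ_{α,k}`:
`f_{α,k}(x) = 2^k α^{n(j)} (1-α)^{k-n(j)}` on `X_j^k = [j/2^k, (j+1)/2^k)`. -/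
noncomputable def binDensity (α : ℝ) (k : ℕ) (x : ℝ) : ℝ :=
  2 ^ k * α ^ binOnes ⌊2 ^ k * x⌋₊ * (1 - α) ^ (k - binOnes ⌊2 ^ k * x⌋₊)


lemma binOnes_zero : binOnes 0 = 0 := by simp [binOnes]

lemma binOnes_rec (j : ℕ) (hj : j ≠ 0) : binOnes j = binOnes (j / 2) + j % 2 := by
  unfold binOnes
  rw [Nat.digits_def' (by norm_num) (Nat.pos_of_ne_zero hj), List.count_cons]
  rcases Nat.mod_two_eq_zero_or_one j with h | h <;> simp [h]

lemma binOnes_two_mul (j : ℕ) : binOnes (2 * j) = binOnes j := by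
  rcases eq_or_ne j 0 with rfl | hj
  · rfl
  · rw [binOnes_rec (2 * j) (by omega)]
    simp [Nat.mul_div_cancel_left, Nat.mul_mod_right]

lemma binOnes_two_mul_add_one (j : ℕ) : binOnes (2 * j + 1) = binOnes j + 1 := by
  rw [binOnes_rec (2 * j + 1) (by omega)]
  have h1 : (2 * j + 1) / 2 = j := by omega
  have h2 : (2 * j + 1) % 2 = 1 := by omega
  rw [h1, h2]
  
lemma binOnes_le {k j : ℕ} (h : j < 2 ^ k) : binOnes j ≤ k := by
  induction k generalizing j with
  | zero => interval_cases j; simp [binOnes_zero]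
  | succ k ih =>
    rcases eq_or_ne j 0 with rfl | hj
    · simp [binOnes_zero]
    · rw [binOnes_rec j hj]
      have : j / 2 < 2 ^ k := by omega
      have := ih this
      omega

/-- The dyadic interval X_j^k. -/
def dyad (k j : ℕ) : Set ℝ := Ico ((j : ℝ) / 2 ^ k) ((j + 1 : ℕ) / 2 ^ k)

lemma floor_eq_on_dyad {k j : ℕ} {x : ℝ} (hx : x ∈ dyad k j) : ⌊(2 : ℝ) ^ k * x⌋₊ = j := by
  obtain ⟨h1, h2⟩ := hx
  have hp : (0:ℝ) < 2 ^ k := by positivity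
  rw [Nat.floor_eq_iff]
  · constructor
    · calc (j:ℝ) = (j / 2 ^ k) * 2 ^ k := by field_simp
        _ ≤ 2 ^ k * x := by rw [mul_comm]; exact mul_le_mul_of_nonneg_left h1 hp.le
    · calc (2:ℝ) ^ k * x < 2 ^ k * ((j + 1 : ℕ) / 2 ^ k) := by
            exact mul_lt_mul_of_pos_left h2 hp
        _ = (j:ℝ) + 1 := by push_cast; field_simp
  · have hx0 : (0:ℝ) ≤ x := le_trans (by positivity) h1
    exact mul_nonneg (by positivity) hx0

lemma binDensity_eq_on_dyad (α : ℝ) {k j : ℕ} {x : ℝ} (hx : x ∈ dyad k j) :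
    binDensity α k x = 2 ^ k * α ^ binOnes j * (1 - α) ^ (k - binOnes j) := by
  rw [binDensity, floor_eq_on_dyad hx]

lemma measurable_binDensity (α : ℝ) (k : ℕ) : Measurable (binDensity α k) := by
  have : binDensity α k = (fun n : ℕ => 2 ^ k * α ^ binOnes n * (1 - α) ^ (k - binOnes n)) ∘
      (fun x : ℝ => ⌊(2:ℝ) ^ k * x⌋₊) := rfl
  rw [this]
  exact measurable_from_nat.comp (Nat.measurable_floor.comp (measurable_const.mul measurable_id))

lemma binDensity_nonneg {α : ℝ} (h0 : 0 < α) (h1 : α < 1) (k : ℕ) (x : ℝ) :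
    0 ≤ binDensity α k x := by
  unfold binDensity
  have : (0:ℝ) ≤ 1 - α := by linarith
  positivity

lemma binDensity_le {α : ℝ} (h0 : 0 < α) (h1 : α < 1) (k : ℕ) (x : ℝ) :
    binDensity α k x ≤ 2 ^ k := by
  unfold binDensity
  have ha : α ^ binOnes ⌊(2:ℝ) ^ k * x⌋₊ ≤ 1 := pow_le_one₀ h0.le h1.le
  have hb : (1 - α) ^ (k - binOnes ⌊(2:ℝ) ^ k * x⌋₊) ≤ 1 := pow_le_one₀ (by linarith) (by linarith)
  calc 2 ^ k * α ^ binOnes ⌊(2:ℝ) ^ k * x⌋₊ * (1 - α) ^ (k - binOnes ⌊(2:ℝ) ^ k * x⌋₊)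
      ≤ 2 ^ k * 1 * 1 := by
        have hc : (0:ℝ) ≤ 1 - α := by linarith
        apply mul_le_mul _ hb (by positivity) (by positivity)
        apply mul_le_mul_of_nonneg_left ha (by positivity)
    _ = 2 ^ k := by ring

lemma integrableOn_binDensity {α : ℝ} (h0 : 0 < α) (h1 : α < 1) (l : ℕ) {s : Set ℝ}
    (hs : volume s ≠ ⊤) : IntegrableOn (binDensity α l) s := by
  apply Measure.integrableOn_of_bounded hs
    (measurable_binDensity α l).aestronglyMeasurable (M := 2 ^ l)
  filter_upwards with x
  rw [Real.norm_eq_abs, abs_of_nonneg (binDensity_nonneg h0 h1 l x)]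
  exact binDensity_le h0 h1 l x

lemma integrableOn_mul_binDensity {α : ℝ} (h0 : 0 < α) (h1 : α < 1) {φ : ℝ → ℝ}
    (hφ : ContinuousOn φ (Icc 0 1)) (l : ℕ) {s : Set ℝ} (hms : MeasurableSet s)
    (hsub : s ⊆ Icc 0 1) : IntegrableOn (fun x => φ x * binDensity α l x) s := by
  obtain ⟨C, hC⟩ := (isCompact_Icc (a := (0:ℝ)) (b := 1)).exists_bound_of_continuousOn hφ
  have hsfin : volume s ≠ ⊤ := by
    refine ne_top_of_le_ne_top ?_ (measure_mono hsub)
    simp [Real.volume_Icc]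
  refine ⟨((hφ.mono hsub).aestronglyMeasurable hms).mul
      (measurable_binDensity α l).aestronglyMeasurable.restrict,
    HasFiniteIntegral.restrict_of_bounded (C := C * 2 ^ l) (lt_top_iff_ne_top.mpr hsfin) ?_⟩
  filter_upwards [ae_restrict_mem hms] with x hx
  rw [Real.norm_eq_abs, abs_mul, abs_of_nonneg (binDensity_nonneg h0 h1 l x)]
  have h1' := hC x (hsub hx)
  have h2' := binDensity_le h0 h1 l x
  have h3' := binDensity_nonneg h0 h1 l x
  have hC0 : 0 ≤ C := le_trans (norm_nonneg _) h1'
  exact mul_le_mul (by simpa [Real.norm_eq_abs] using h1') h2' h3' hC0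

lemma volume_dyad (k j : ℕ) : volume (dyad k j) = ENNReal.ofReal ((2:ℝ)⁻¹ ^ k) := by
  rw [dyad, Real.volume_Ico]
  congr 1
  push_cast
  field_simp
  rw [← mul_pow]; norm_num

lemma measurableSet_dyad (k j : ℕ) : MeasurableSet (dyad k j) := measurableSet_Ico

lemma mass {α : ℝ} (h0 : 0 < α) (h1 : α < 1) :
    ∀ (d k j : ℕ), j < 2 ^ k →
      ∫ x in dyad k j, binDensity α (k + d) x
        = α ^ binOnes j * (1 - α) ^ (k - binOnes j) := by
  intro d
  induction d with
  | zero =>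
    intro k j hj
    simp only [Nat.add_zero]
    rw [setIntegral_congr_fun (measurableSet_dyad k j)
      (g := fun _ => 2 ^ k * α ^ binOnes j * (1 - α) ^ (k - binOnes j))
      (fun x hx => binDensity_eq_on_dyad α hx)]
    rw [setIntegral_const, measureReal_def, volume_dyad, smul_eq_mul,
      ENNReal.toReal_ofReal (by positivity)]
    have h2 : ((2:ℝ)⁻¹) ^ k * 2 ^ k = 1 := by
      rw [← mul_pow]; norm_num
    linear_combination (α ^ binOnes j * (1 - α) ^ (k - binOnes j)) * h2
  | succ d ih =>
    intro k j hj
    have e1 : ((2*j:ℕ):ℝ)/2^(k+1) = (j:ℝ)/2^k := by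
      push_cast; rw [pow_succ]; field_simp
    have e2 : (((2*j+1)+1:ℕ):ℝ)/2^(k+1) = ((j+1:ℕ):ℝ)/2^k := by
      push_cast; rw [pow_succ]; field_simp; ring
    have hsplit : dyad k j = dyad (k+1) (2*j) ∪ dyad (k+1) (2*j+1) := by
      rw [dyad, dyad, dyad, Ico_union_Ico_eq_Ico, e1, e2]
      · gcongr <;> push_cast <;> linarith
      · gcongr <;> push_cast <;> linarith
    have hdisj : Disjoint (dyad (k+1) (2*j)) (dyad (k+1) (2*j+1)) := by
      rw [dyad, dyad]
      have : ((2*j+1 : ℕ) : ℝ) / 2 ^ (k+1) = ((2*j) + 1 : ℕ) / 2 ^ (k+1) := by norm_num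
      rw [this]
      exact Ico_disjoint_Ico_same
    have hk : k + (d + 1) = (k + 1) + d := by omega
    rw [hk, hsplit, setIntegral_union hdisj (measurableSet_dyad _ _)
      (integrableOn_binDensity h0 h1 _ (by rw [volume_dyad]; exact ENNReal.ofReal_ne_top))
      (integrableOn_binDensity h0 h1 _ (by rw [volume_dyad]; exact ENNReal.ofReal_ne_top)),
      ih (k+1) (2*j) (by omega), ih (k+1) (2*j+1) (by omega),
      binOnes_two_mul, binOnes_two_mul_add_one]
    have hn : binOnes j ≤ k := binOnes_le hj
    have e1 : k + 1 - binOnes j = (k - binOnes j) + 1 := by omega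
    have e2 : k + 1 - (binOnes j + 1) = k - binOnes j := by omega
    rw [e1, e2, pow_succ, pow_succ]
    ring

lemma dyad_subset_Icc {k j : ℕ} (hj : j < 2 ^ k) : dyad k j ⊆ Icc (0:ℝ) 1 := by
  rintro x ⟨hx1, hx2⟩
  constructor
  · exact le_trans (by positivity) hx1
  · have h : ((j + 1 : ℕ) : ℝ) / 2 ^ k ≤ 1 := by
      rw [div_le_one (by positivity)]
      have h2 : (j + 1 : ℕ) ≤ 2 ^ k := hj
      exact_mod_cast h2
    exact le_of_lt (lt_of_lt_of_le hx2 h)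

lemma dyad_zero : dyad 0 0 = Ico (0:ℝ) 1 := by
  simp [dyad]

lemma dyad_disjoint {k i j : ℕ} (h : i ≠ j) : Disjoint (dyad k i) (dyad k j) := by
  rw [dyad, dyad, Ico_disjoint_Ico]
  rcases lt_or_gt_of_ne h with hij | hij
  · calc min (((i+1:ℕ):ℝ)/2^k) (((j+1:ℕ):ℝ)/2^k) ≤ ((i+1:ℕ):ℝ)/2^k := min_le_left _ _
      _ ≤ (j:ℝ)/2^k := by gcongr; exact_mod_cast hij
      _ ≤ max ((i:ℝ)/2^k) ((j:ℝ)/2^k) := le_max_right _ _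
  · calc min (((i+1:ℕ):ℝ)/2^k) (((j+1:ℕ):ℝ)/2^k) ≤ ((j+1:ℕ):ℝ)/2^k := min_le_right _ _
      _ ≤ (i:ℝ)/2^k := by gcongr; exact_mod_cast hij
      _ ≤ max ((i:ℝ)/2^k) ((j:ℝ)/2^k) := le_max_left _ _

lemma iUnion_dyad (k : ℕ) : ⋃ j ∈ Finset.range (2^k), dyad k j = Ico (0:ℝ) 1 := by
  ext x
  simp only [mem_iUnion, Finset.mem_range, exists_prop]
  constructor
  · rintro ⟨j, hj, hx⟩
    have := dyad_subset_Icc hj hx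
    obtain ⟨h1, h2⟩ := hx
    refine ⟨this.1, ?_⟩
    have h : ((j + 1 : ℕ) : ℝ) / 2 ^ k ≤ 1 := by
      rw [div_le_one (by positivity)]
      exact_mod_cast hj
    exact lt_of_lt_of_le h2 h
  · rintro ⟨hx0, hx1⟩
    have hp : (0:ℝ) < 2 ^ k := by positivity
    refine ⟨⌊(2:ℝ)^k * x⌋₊, ?_, ?_, ?_⟩
    · rw [Nat.floor_lt (mul_nonneg (by positivity) hx0)]
      calc (2:ℝ)^k * x < 2^k * 1 := by gcongr
        _ = ((2^k : ℕ) : ℝ) := by push_cast; ring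
    · rw [div_le_iff₀ hp, mul_comm]
      exact Nat.floor_le (mul_nonneg hx0 (by positivity))
    · rw [lt_div_iff₀ hp, mul_comm]
      calc (2:ℝ)^k * x < ⌊(2:ℝ)^k * x⌋₊ + 1 := Nat.lt_floor_add_one _
        _ = ((⌊(2:ℝ)^k * x⌋₊ + 1 : ℕ) : ℝ) := by push_cast; ring

lemma integral_Ico_eq_sum {f : ℝ → ℝ} (k : ℕ)
    (hf : ∀ j ∈ Finset.range (2^k), IntegrableOn f (dyad k j)) :
    ∫ x in Ico (0:ℝ) 1, f x = ∑ j ∈ Finset.range (2^k), ∫ x in dyad k j, f x := by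
  rw [← iUnion_dyad k]
  exact integral_biUnion_finset _ (fun i _ => measurableSet_dyad k i)
    (fun i _ j _ hij => dyad_disjoint hij) hf

lemma key_estimate {α : ℝ} (h0 : 0 < α) (h1 : α < 1) {φ : ℝ → ℝ}
    (hφ : ContinuousOn φ (Icc 0 1)) {ε : ℝ} {k l j : ℕ} (hl : k ≤ l) (hj : j < 2 ^ k)
    (hmod : ∀ x ∈ Icc (0:ℝ) 1, ∀ y ∈ Icc (0:ℝ) 1, |x - y| ≤ (2:ℝ)⁻¹ ^ k → |φ x - φ y| ≤ ε) :
    |(∫ x in dyad k j, φ x * binDensity α l x)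
        - φ ((j:ℝ)/2^k) * (α ^ binOnes j * (1 - α) ^ (k - binOnes j))|
      ≤ ε * (α ^ binOnes j * (1 - α) ^ (k - binOnes j)) := by
  set t : ℝ := (j:ℝ)/2^k with ht
  set m : ℝ := α ^ binOnes j * (1 - α) ^ (k - binOnes j) with hm
  have hsub := dyad_subset_Icc hj
  have ht1 : t ∈ Icc (0:ℝ) 1 := by
    constructor
    · positivity
    · rw [ht, div_le_one (by positivity)]
      calc (j:ℝ) ≤ ((2^k:ℕ):ℝ) := by exact_mod_cast hj.le
        _ = (2:ℝ)^k := by push_cast; ring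
  have hmass : (∫ x in dyad k j, binDensity α l x) = m := by
    have h := mass h0 h1 (l - k) k j hj
    rwa [Nat.add_sub_cancel' hl] at h
  have hintd : IntegrableOn (binDensity α l) (dyad k j) :=
    integrableOn_binDensity h0 h1 l (by rw [volume_dyad]; exact ENNReal.ofReal_ne_top)
  have hintφ : IntegrableOn (fun x => φ x * binDensity α l x) (dyad k j) :=
    integrableOn_mul_binDensity h0 h1 hφ l (measurableSet_dyad k j) hsub
  have hconst : φ t * m = ∫ x in dyad k j, φ t * binDensity α l x := by
    rw [MeasureTheory.integral_const_mul, hmass]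
  rw [hconst, ← integral_sub hintφ (hintd.const_mul (φ t))]
  have hdiff : ∀ x ∈ dyad k j, |φ x * binDensity α l x - φ t * binDensity α l x|
      ≤ ε * binDensity α l x := by
    intro x hx
    rw [← sub_mul, abs_mul, abs_of_nonneg (binDensity_nonneg h0 h1 l x)]
    apply mul_le_mul_of_nonneg_right _ (binDensity_nonneg h0 h1 l x)
    apply hmod x (hsub hx) t ht1
    obtain ⟨hx1, hx2⟩ := hx
    rw [abs_of_nonneg (by linarith : (0:ℝ) ≤ x - t)]
    have he : ((j+1:ℕ):ℝ)/2^k = t + (2:ℝ)⁻¹^k := by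
      rw [ht]; push_cast; field_simp
      rw [← mul_pow]; norm_num
    rw [he] at hx2
    linarith
  calc |∫ x in dyad k j, (φ x * binDensity α l x - φ t * binDensity α l x)|
      ≤ ∫ x in dyad k j, |φ x * binDensity α l x - φ t * binDensity α l x| := by
        simpa [Real.norm_eq_abs] using
          norm_integral_le_integral_norm (μ := volume.restrict (dyad k j))
            (fun x => φ x * binDensity α l x - φ t * binDensity α l x)
    _ ≤ ∫ x in dyad k j, ε * binDensity α l x :=
        setIntegral_mono_on ((hintφ.sub (hintd.const_mul (φ t))).abs) (hintd.const_mul ε)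
          (measurableSet_dyad k j) hdiff
    _ = ε * m := by rw [MeasureTheory.integral_const_mul, hmass]

theorem binomial_integrals_cauchy (α : ℝ) (hα0 : 0 < α) (hα1 : α < 1)
    (φ : ℝ → ℝ) (hφ : ContinuousOn φ (Icc 0 1)) :
    CauchySeq (fun k : ℕ => ∫ x in Ico (0 : ℝ) 1, φ x * binDensity α k x) := by
  rw [Metric.cauchySeq_iff']
  intro ε hε
  have hu := (isCompact_Icc (a := (0:ℝ)) (b := 1)).uniformContinuousOn_of_continuous hφ
  rw [Metric.uniformContinuousOn_iff] at hu
  obtain ⟨δ, hδ, hδ'⟩ := hu (ε/3) (by linarith)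
  obtain ⟨N, hN⟩ := exists_pow_lt_of_lt_one hδ (by norm_num : (2:ℝ)⁻¹ < 1)
  refine ⟨N, fun l hl => ?_⟩
  have hmod : ∀ x ∈ Icc (0:ℝ) 1, ∀ y ∈ Icc (0:ℝ) 1,
      |x - y| ≤ (2:ℝ)⁻¹ ^ N → |φ x - φ y| ≤ ε/3 := by
    intro x hx y hy hxy
    have h := hδ' x hx y hy (by rw [Real.dist_eq]; exact lt_of_le_of_lt hxy hN)
    rw [Real.dist_eq] at h; exact h.le
  have hsum : ∑ j ∈ Finset.range (2^N),
      α ^ binOnes j * (1 - α) ^ (N - binOnes j) = 1 := by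
    have h1 : ∫ x in Ico (0:ℝ) 1, binDensity α N x
        = ∑ j ∈ Finset.range (2^N), α ^ binOnes j * (1 - α) ^ (N - binOnes j) := by
      rw [integral_Ico_eq_sum N (fun j _ => integrableOn_binDensity hα0 hα1 N
        (by rw [volume_dyad]; exact ENNReal.ofReal_ne_top))]
      refine Finset.sum_congr rfl fun j hj => ?_
      simpa using mass hα0 hα1 0 N j (Finset.mem_range.mp hj)
    have h2 : ∫ x in Ico (0:ℝ) 1, binDensity α N x = 1 := by
      rw [← dyad_zero]
      have h := mass hα0 hα1 N 0 0 (by norm_num)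
      simpa [binOnes_zero] using h
    rw [← h1, h2]
  have hdec : ∀ l' : ℕ, ∫ x in Ico (0:ℝ) 1, φ x * binDensity α l' x
      = ∑ j ∈ Finset.range (2^N), ∫ x in dyad N j, φ x * binDensity α l' x :=
    fun l' => integral_Ico_eq_sum N (fun j hj => integrableOn_mul_binDensity hα0 hα1 hφ l'
      (measurableSet_dyad N j) (dyad_subset_Icc (Finset.mem_range.mp hj)))
  rw [Real.dist_eq, hdec l, hdec N, ← Finset.sum_sub_distrib]
  have hle : |∑ j ∈ Finset.range (2^N), ((∫ x in dyad N j, φ x * binDensity α l x)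
        - ∫ x in dyad N j, φ x * binDensity α N x)| ≤ 2*(ε/3) := by
    calc |∑ j ∈ Finset.range (2^N), ((∫ x in dyad N j, φ x * binDensity α l x)
          - ∫ x in dyad N j, φ x * binDensity α N x)|
        ≤ ∑ j ∈ Finset.range (2^N), |(∫ x in dyad N j, φ x * binDensity α l x)
          - ∫ x in dyad N j, φ x * binDensity α N x| := Finset.abs_sum_le_sum_abs _ _
      _ ≤ ∑ j ∈ Finset.range (2^N),
          (2*(ε/3)) * (α ^ binOnes j * (1 - α) ^ (N - binOnes j)) := by
          apply Finset.sum_le_sum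
          intro j hj
          have hjlt := Finset.mem_range.mp hj
          have k1 := key_estimate hα0 hα1 hφ hl hjlt hmod
          have k2 := key_estimate hα0 hα1 hφ (le_refl N) hjlt hmod
          have tri := abs_sub_le (∫ x in dyad N j, φ x * binDensity α l x)
            (φ ((j:ℝ)/2^N) * (α ^ binOnes j * (1 - α) ^ (N - binOnes j)))
            (∫ x in dyad N j, φ x * binDensity α N x)
          rw [abs_sub_comm (φ ((j:ℝ)/2^N) * (α ^ binOnes j * (1 - α) ^ (N - binOnes j)))] at tri
          linarith
      _ = 2*(ε/3) := by rw [← Finset.mul_sum, hsum, mul_one]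
  linarith [hle]
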